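/- Let G = K ⋊_θ Q with Q finite. Then G is icc if and only if K is icc and the induced map Θ : Q → Out(K) is injective. -/

import Mathlib

/-- The conjugacy class of `u` in `G`. -/
def conjClass {G : Type*} [Group G] (u : G) : Set G := {x | IsConj u x}

/-- A group is icc if it is nontrivial and every nontrivial conjugacy class is infinite. -/
def IsICC (G : Type*) [Group G] : Prop :=
  Nontrivial G ∧ ∀ g : G, g ≠ 1 → (conjClass g).Infinite

section Aux

variable {K : Type*} [Group K]

lemma mem_conjClass_iff {z x : K} : x ∈ conjClass z ↔ ∃ c : K, c * z * c⁻¹ = x := by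
  simp [conjClass, isConj_iff]

/-- If `z` commutes with a finite-index subgroup, its conjugacy class is finite. -/
lemma finite_conjClass_of_commute (N : Subgroup K) [N.FiniteIndex] (z : K)
    (hz : ∀ n ∈ N, n * z = z * n) : (conjClass z).Finite := by
  refine (Set.finite_range (fun c : K ⧸ N => c.out * z * c.out⁻¹)).subset ?_
  intro x hx
  obtain ⟨c, hc⟩ := mem_conjClass_iff.mp hx
  refine ⟨QuotientGroup.mk c, ?_⟩
  set d := (QuotientGroup.mk c : K ⧸ N).out with hd
  have hmem : d⁻¹ * c ∈ N := QuotientGroup.eq.mp (QuotientGroup.out_eq' _)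
  have h1 : z * (d⁻¹ * c) = (d⁻¹ * c) * z := (hz _ hmem).symm
  calc d * z * d⁻¹ = d * (z * (d⁻¹ * c)) * c⁻¹ := by group
    _ = d * ((d⁻¹ * c) * z) * c⁻¹ := by rw [h1]
    _ = c * z * c⁻¹ := by group
    _ = x := hc

/-- An automorphism of an icc group fixing a finite-index subgroup pointwise is the
identity. -/
lemma mulAut_fix_finiteIndex (hK : IsICC K) (ψ : MulAut K) (H : Subgroup K)
    [H.FiniteIndex] (hfix : ∀ h ∈ H, ψ h = h) (x : K) : ψ x = x := by
  set N := H.normalCore with hN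
  have hz : ∀ n ∈ N, n * (x⁻¹ * ψ x) = (x⁻¹ * ψ x) * n := by
    intro n hn
    have hxn : x * n * x⁻¹ ∈ N := Subgroup.Normal.conj_mem (H.normalCore_normal) n hn x
    have h1 : ψ (x * n * x⁻¹) = x * n * x⁻¹ := hfix _ (H.normalCore_le hxn)
    have hn' : ψ n = n := hfix _ (H.normalCore_le hn)
    have h2 : ψ x * n * (ψ x)⁻¹ = x * n * x⁻¹ := by
      rw [← h1]; simp [map_mul, hn']
    calc n * (x⁻¹ * ψ x) = x⁻¹ * (x * n * x⁻¹ * ψ x) := by group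
      _ = x⁻¹ * (ψ x * n * (ψ x)⁻¹ * ψ x) := by rw [h2]
      _ = (x⁻¹ * ψ x) * n := by group
  have hfin : (conjClass (x⁻¹ * ψ x)).Finite := finite_conjClass_of_commute N _ hz
  by_contra hne
  have hz1 : x⁻¹ * ψ x ≠ 1 := by
    intro h
    apply hne
    have := congrArg (fun y => x * y) h
    simpa [mul_assoc] using this
  exact hK.2 _ hz1 hfin

/-- The fixed-point subgroup of an automorphism. -/
def fixSubgroup (ψ : MulAut K) : Subgroup K where
  carrier := {c | ψ c = c}
  one_mem' := map_one ψ
  mul_mem' := by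
    intro a b ha hb
    simp only [Set.mem_setOf_eq] at *
    rw [map_mul, ha, hb]
  inv_mem' := by
    intro a ha
    simp only [Set.mem_setOf_eq] at *
    rw [map_inv, ha]

lemma mem_fixSubgroup_iff (ψ : MulAut K) (c : K) : c ∈ fixSubgroup ψ ↔ ψ c = c := Iff.rfl

/-- Conjugacy classes transform under automorphisms. -/
lemma conjClass_aut (e : MulAut K) (k : K) : conjClass (e k) = e '' conjClass k := by
  ext y
  constructor
  · intro hy
    obtain ⟨c, hc⟩ := mem_conjClass_iff.mp hy
    exact ⟨e.symm c * k * (e.symm c)⁻¹, mem_conjClass_iff.mpr ⟨e.symm c, rfl⟩, by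
      simp [map_mul, hc]⟩
  · rintro ⟨x, hx, rfl⟩
    obtain ⟨c, hc⟩ := mem_conjClass_iff.mp hx
    exact mem_conjClass_iff.mpr ⟨e c, by rw [← hc]; simp [map_mul]⟩

end Aux

section SDP

open SemidirectProduct

variable {K Q : Type*} [Group K] [Group Q] (θ : Q →* MulAut K)

lemma sdp_conj_mk (a k : K) (p q : Q) :
    (⟨a, p⟩ : K ⋊[θ] Q) * ⟨k, q⟩ * (⟨a, p⟩ : K ⋊[θ] Q)⁻¹ =
      ⟨a * θ p k * θ (p*q*p⁻¹) a⁻¹, p*q*p⁻¹⟩ := by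
  have h : ∀ x : K, θ (p*q) (θ p⁻¹ x) = θ (p*q*p⁻¹) x := by
    intro x; simp [map_mul, MulAut.mul_apply]
  ext
  · simp only [mul_left, inv_left, inv_right, mul_right]
    rw [h, mul_assoc]
  · simp [mul_right, inv_right]

lemma sdp_centralizes (b : K) (r : Q) (hr : θ r = MulAut.conj b) (a : K) :
    (⟨b⁻¹, r⟩ : K ⋊[θ] Q) * inl a = inl a * ⟨b⁻¹, r⟩ := by
  ext
  · simp [mul_left, hr, MulAut.conj_apply, mul_assoc]
  · simp [mul_right]

end SDP

theorem icc_iff_of_finite_quotient {K Q : Type*} [Group K] [Group Q] [Finite Q]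
    (θ : Q →* MulAut K) :
    IsICC (K ⋊[θ] Q) ↔
      IsICC K ∧ ∀ q : Q, (∃ k : K, θ q = MulAut.conj k) → q = 1 := by
  open SemidirectProduct in
  constructor
  · intro hG
    have hKnt : Nontrivial K := by
      by_contra hns
      rw [not_nontrivial_iff_subsingleton] at hns
      have : Finite (K ⋊[θ] Q) := by
        have : Finite K := Finite.of_subsingleton
        exact Finite.of_injective (fun g : K ⋊[θ] Q => (g.left, g.right))
          (fun a b h => by
            cases a; cases b
            simp only [Prod.mk.injEq] at h
            simp [h.1, h.2])
      have := hG.1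
      obtain ⟨g, hg⟩ := exists_ne (1 : K ⋊[θ] Q)
      exact hG.2 g hg (Set.toFinite _)
    have hKclass : ∀ k : K, k ≠ 1 → (conjClass k).Infinite := by
      intro k hk
      by_contra hfin
      rw [Set.not_infinite] at hfin
      have hsub : conjClass (inl k : K ⋊[θ] Q) ⊆
          ⋃ q : Q, (inl '' conjClass (θ q k)) := by
        intro x hx
        obtain ⟨c, hc⟩ := mem_conjClass_iff.mp hx
        have hc' : (⟨c.left, c.right⟩ : K ⋊[θ] Q) * ⟨k, 1⟩ *
            (⟨c.left, c.right⟩ : K ⋊[θ] Q)⁻¹ = x := hc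
        rw [sdp_conj_mk] at hc'
        refine Set.mem_iUnion.mpr ⟨c.right, ⟨c.left * θ c.right k * c.left⁻¹,
          mem_conjClass_iff.mpr ⟨c.left, rfl⟩, ?_⟩⟩
        rw [← hc']
        ext <;> simp
      have : (conjClass (inl k : K ⋊[θ] Q)).Finite := by
        refine Set.Finite.subset (Set.finite_iUnion fun q => ?_) hsub
        rw [conjClass_aut (θ q) k]
        exact ((hfin.image _).image _)
      have hk1 : (inl k : K ⋊[θ] Q) ≠ 1 := by
        intro h
        exact hk (inl_injective (by rw [h, map_one]))
      exact hG.2 _ hk1 this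
    refine ⟨⟨hKnt, hKclass⟩, ?_⟩
    intro q ⟨k, hkq⟩
    by_contra hq
    set g : K ⋊[θ] Q := ⟨k⁻¹, q⟩ with hgdef
    have hg1 : g ≠ 1 := by
      intro h
      exact hq (congrArg SemidirectProduct.right h)
    have hsub : conjClass g ⊆
        Set.range (fun p : Q => (inr p : K ⋊[θ] Q) * g * (inr p)⁻¹) := by
      intro x hx
      obtain ⟨c, hc⟩ := mem_conjClass_iff.mp hx
      refine ⟨c.right, ?_⟩
      have hmk : (⟨θ c.right k⁻¹, c.right * q * c.right⁻¹⟩ : K ⋊[θ] Q) =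
          inr c.right * g * (inr c.right)⁻¹ := by
        have := sdp_conj_mk θ 1 k⁻¹ c.right q
        simp only [map_one, inv_one, mul_one, MulAut.one_apply] at this
        rw [show (inr c.right : K ⋊[θ] Q) = ⟨1, c.right⟩ from rfl]
        rw [this]
        ext <;> simp
      have hconj : θ (c.right * q * c.right⁻¹) = MulAut.conj (θ c.right k) := by
        ext x
        simp only [map_mul, map_inv, MulAut.mul_apply, MulAut.conj_apply, hkq,
          MulAut.apply_inv_self]
      have hcent : ∀ a : K, (inr c.right * g * (inr c.right)⁻¹) * inl a =
          inl a * (inr c.right * g * (inr c.right)⁻¹) := by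
        intro a
        rw [← hmk]
        have := sdp_centralizes θ (θ c.right k) (c.right * q * c.right⁻¹) hconj a
        rw [← map_inv] at this
        exact this
      calc inr c.right * g * (inr c.right)⁻¹
          = inl c.left * (inr c.right * g * (inr c.right)⁻¹) * (inl c.left)⁻¹ := by
            rw [← hcent c.left]; group
        _ = (inl c.left * inr c.right) * g * (inl c.left * inr c.right)⁻¹ := by
            group
        _ = c * g * c⁻¹ := by rw [inl_left_mul_inr_right]
        _ = x := hc
    exact absurd ((Set.finite_range _).subset hsub) (hG.2 g hg1)
  · rintro ⟨hK, hΘ⟩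
    constructor
    · obtain ⟨x, y, hxy⟩ := hK.1
      exact ⟨inl x, inl y, fun h => hxy (inl_injective h)⟩
    · intro g hg
      set k := g.left with hkdef
      set q := g.right with hqdef
      have hgmk : g = ⟨k, q⟩ := rfl
      set T : Set K := Set.range (fun a : K => a * k * θ q a⁻¹) with hTdef
      have hTsub : (fun t : K => (⟨t, q⟩ : K ⋊[θ] Q)) '' T ⊆ conjClass g := by
        rintro x ⟨t, ⟨a, rfl⟩, rfl⟩
        refine mem_conjClass_iff.mpr ⟨⟨a, 1⟩, ?_⟩
        rw [hgmk, sdp_conj_mk]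
        ext <;> simp
      suffices hT : T.Infinite by
        apply Set.Infinite.mono hTsub
        apply Set.Infinite.image ?_ hT
        intro a _ b _ hab
        exact congrArg SemidirectProduct.left hab
      by_cases hq : q = 1
      · have hk1 : k ≠ 1 := by
          intro hk1
          apply hg
          rw [hgmk, hk1, hq]; rfl
        refine (hK.2 k hk1).mono ?_
        intro x hx
        obtain ⟨c, hc⟩ := mem_conjClass_iff.mp hx
        exact ⟨c, by simpa [hq] using hc⟩
      · by_contra hT
        rw [Set.not_infinite] at hT
        set ψ : MulAut K := (θ q).trans (MulAut.conj k) with hψdef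
        have hψ : ∀ c : K, ψ c = k * θ q c * k⁻¹ := fun c => rfl
        set H := fixSubgroup ψ with hHdef
        have key : ∀ a b : K, a * k * θ q a⁻¹ = b * k * θ q b⁻¹ ↔ b⁻¹ * a ∈ H := by
          intro a b
          rw [mem_fixSubgroup_iff, hψ]
          constructor
          · intro h
            calc k * θ q (b⁻¹ * a) * k⁻¹
                = b⁻¹ * (b * k * θ q b⁻¹ * θ q a) * k⁻¹ := by
                  simp only [map_mul, map_inv]; group
              _ = b⁻¹ * (a * k * θ q a⁻¹ * θ q a) * k⁻¹ := by rw [h]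
              _ = b⁻¹ * a := by simp only [map_inv]; group
          · intro h
            have h2 : b⁻¹ * a * k = k * θ q (b⁻¹ * a) := by
              have h2' := congrArg (fun y => y * k) h
              simpa [mul_assoc] using h2'.symm
            calc a * k * θ q a⁻¹
                = b * ((b⁻¹ * a * k) * (θ q a)⁻¹) := by simp only [map_inv]; group
              _ = b * ((k * θ q (b⁻¹ * a)) * (θ q a)⁻¹) := by rw [h2]
              _ = b * k * θ q b⁻¹ := by simp only [map_mul, map_inv]; group
        have hinj : Function.Injective
            (fun c : K ⧸ H => (fun a : K => a * k * θ q a⁻¹) c.out) := by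
          intro c d hcd
          have : d.out⁻¹ * c.out ∈ H := (key c.out d.out).mp hcd
          rw [← QuotientGroup.out_eq' c, ← QuotientGroup.out_eq' d]
          exact (QuotientGroup.eq.mpr this).symm
        have hfinq : Finite (K ⧸ H) := by
          have : Finite ↥T := hT.to_subtype
          exact Finite.of_injective
            (fun c : K ⧸ H => (⟨c.out * k * θ q c.out⁻¹, ⟨c.out, rfl⟩⟩ : ↥T))
            (fun c d hcd => hinj (by simpa using congrArg Subtype.val hcd))
        have hHfi : H.FiniteIndex := Subgroup.finiteIndex_of_finite_quotient (H := H)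
        have hψ1 : ∀ x, ψ x = x :=
          mulAut_fix_finiteIndex hK ψ H (fun h hh => hh)
        refine absurd (hΘ q ⟨k⁻¹, ?_⟩) hq
        ext x
        have hx := hψ1 x
        rw [hψ] at hx
        rw [MulAut.conj_apply, inv_inv]
        calc θ q x = k⁻¹ * (k * θ q x * k⁻¹) * k := by group
          _ = k⁻¹ * x * k := by rw [hx]
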